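/- For all real s ≥ 0, e^s + e^{-s} - 2 ≤ s^2 · (1 + (s·e^s)/6). -/

import Mathlib

open Real Set

private lemma davies_nonneg_of_deriv (f : ℝ → ℝ) (hf : Differentiable ℝ f)
    (h0 : f 0 = 0) (hd : ∀ x, 0 ≤ x → 0 ≤ deriv f x) :
    ∀ s, 0 ≤ s → 0 ≤ f s := by
  intro s hs
  have hmono : MonotoneOn f (Ici (0:ℝ)) := by
    apply monotoneOn_of_deriv_nonneg (convex_Ici 0) hf.continuous.continuousOn
      (hf.differentiableOn)
    intro x hx
    rw [interior_Ici] at hx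
    exact hd x (le_of_lt hx)
  have := hmono (self_mem_Ici) (mem_Ici.mpr hs) hs
  rwa [h0] at this

private lemma davies_L1 (s : ℝ) : Real.exp s * (1 - s) ≤ 1 := by
  have h := Real.add_one_le_exp (-s)
  have hpos := Real.exp_pos s
  have h2 : Real.exp s * (1 - s) ≤ Real.exp s * Real.exp (-s) := by
    apply mul_le_mul_of_nonneg_left _ hpos.le
    linarith
  calc Real.exp s * (1 - s) ≤ Real.exp s * Real.exp (-s) := h2
    _ = 1 := by rw [← Real.exp_add]; simp

private lemma davies_L2 (s : ℝ) : Real.exp s ≤ 1 + s * Real.exp s := by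
  nlinarith [davies_L1 s]

private lemma davies_L3 (s : ℝ) (hs : 0 ≤ s) :
    Real.exp s ≤ 1 + s + s ^ 2 * Real.exp s / 2 := by
  have key := davies_nonneg_of_deriv
    (fun x => 1 + x + x ^ 2 * Real.exp x / 2 - Real.exp x) ?_ (by norm_num) ?_ s hs
  · simpa using key
  · fun_prop
  · intro x hx
    have hder : HasDerivAt (fun x : ℝ => 1 + x + x ^ 2 * Real.exp x / 2 - Real.exp x)
        (1 + (2 * x * Real.exp x + x ^ 2 * Real.exp x) / 2 - Real.exp x) x := by
      simpa [Pi.add_def, Pi.sub_def] using (((hasDerivAt_const x (1:ℝ)).add (hasDerivAt_id x)).add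
        (((hasDerivAt_pow 2 x).mul (Real.hasDerivAt_exp x)).div_const 2)).sub
        (Real.hasDerivAt_exp x)
    rw [hder.deriv]
    have h2 := davies_L2 x
    have := Real.exp_pos x
    nlinarith [sq_nonneg x, mul_nonneg (sq_nonneg x) this.le]

private lemma davies_L4 (s : ℝ) (hs : 0 ≤ s) :
    Real.exp s ≤ 1 + s + s ^ 2 / 2 + s ^ 3 * Real.exp s / 6 := by
  have key := davies_nonneg_of_deriv
    (fun x => 1 + x + x ^ 2 / 2 + x ^ 3 * Real.exp x / 6 - Real.exp x) ?_ (by norm_num) ?_ s hs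
  · simpa using key
  · fun_prop
  · intro x hx
    have hder : HasDerivAt
        (fun x : ℝ => 1 + x + x ^ 2 / 2 + x ^ 3 * Real.exp x / 6 - Real.exp x)
        (1 + 2 * x / 2 + (3 * x ^ 2 * Real.exp x + x ^ 3 * Real.exp x) / 6 - Real.exp x) x := by
      simpa [Pi.add_def, Pi.sub_def] using ((((hasDerivAt_const x (1:ℝ)).add (hasDerivAt_id x)).add
        ((hasDerivAt_pow 2 x).div_const 2)).add
        (((hasDerivAt_pow 3 x).mul (Real.hasDerivAt_exp x)).div_const 6)).sub
        (Real.hasDerivAt_exp x)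
    rw [hder.deriv]
    have h3 := davies_L3 x hx
    have := Real.exp_pos x
    nlinarith [mul_nonneg (mul_nonneg (mul_nonneg hx hx) hx) this.le,
      mul_nonneg (mul_nonneg hx hx) this.le]

private lemma davies_L5 (s : ℝ) (hs : 0 ≤ s) :
    Real.exp (-s) ≤ 1 - s + s ^ 2 / 2 := by
  have key := davies_nonneg_of_deriv
    (fun x => 1 - x + x ^ 2 / 2 - Real.exp (-x)) ?_ (by norm_num) ?_ s hs
  · simpa using key
  · fun_prop
  · intro x hx
    have hder : HasDerivAt (fun x : ℝ => 1 - x + x ^ 2 / 2 - Real.exp (-x))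
        ((0 - 1) + 2 * x / 2 - Real.exp (-x) * (-1)) x := by
      simpa [Pi.add_def, Pi.sub_def] using (((hasDerivAt_const x (1:ℝ)).sub (hasDerivAt_id x)).add
        ((hasDerivAt_pow 2 x).div_const 2)).sub ((hasDerivAt_neg x).exp)
    rw [hder.deriv]
    have h := Real.add_one_le_exp (-x)
    nlinarith

theorem exp_add_exp_neg_sub_two_le_davies (s : ℝ) (hs : 0 ≤ s) :
    Real.exp s + Real.exp (-s) - 2 ≤ s ^ 2 * (1 + s * Real.exp s / 6) := by
  have h4 := davies_L4 s hs
  have h5 := davies_L5 s hs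
  nlinarith
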